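/- Under the assumptions above (minimizers of D on B_R are not global minimizers, i.e. K*(y-u) ≠ 0), the support of any minimizer x̃ is contained in the finite set Γ = {λ : |(K*(y-u))_λ| = ‖K*(y-u)‖_∞}; in particular, every minimizer has finitely many nonzero entries. -/

import Mathlib

open scoped ENNReal NNReal

/-- The `ℓ¹`-ball of radius `R` inside `ℓ²(I)`. -/
noncomputable def l1Ball (I : Type*) (R : ℝ) : Set (lp (fun _ : I => ℝ) 2) :=
  {x | (∑' i, (‖x i‖₊ : ℝ≥0∞)) ≤ ENNReal.ofReal R}

set_option linter.unusedVariables false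

lemma l1Ball_convex_aux {I : Type*} {R t : ℝ} (ht0 : 0 ≤ t) (ht1 : t ≤ 1)
    {x w : lp (fun _ : I => ℝ) 2} (hx : x ∈ l1Ball I R) (hw : w ∈ l1Ball I R) :
    x + t • (w - x) ∈ l1Ball I R := by
  simp only [l1Ball, Set.mem_setOf_eq] at hx hw ⊢
  have happ : ∀ j, (x + t • (w - x) : lp (fun _ : I => ℝ) 2) j = (1 - t) * x j + t * w j := by
    intro j
    simp only [lp.coeFn_add, lp.coeFn_smul, lp.coeFn_sub, Pi.add_apply, Pi.smul_apply,
      Pi.sub_apply, smul_eq_mul]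
    ring
  calc (∑' j, (‖(x + t • (w - x) : lp (fun _ : I => ℝ) 2) j‖₊ : ℝ≥0∞))
      ≤ ∑' j, ((‖(1 - t) * x j‖₊ : ℝ≥0∞) + (‖t * w j‖₊ : ℝ≥0∞)) := by
        refine ENNReal.tsum_le_tsum fun j => ?_
        rw [happ j]
        rw [← ENNReal.coe_add, ENNReal.coe_le_coe]
        exact nnnorm_add_le _ _
    _ = (∑' j, (‖(1 - t)‖₊ : ℝ≥0∞) * (‖x j‖₊ : ℝ≥0∞))
        + ∑' j, (‖t‖₊ : ℝ≥0∞) * (‖w j‖₊ : ℝ≥0∞) := by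
        rw [ENNReal.tsum_add]
        simp [nnnorm_mul, ENNReal.coe_mul]
    _ = ENNReal.ofReal (1 - t) * ∑' j, (‖x j‖₊ : ℝ≥0∞)
        + ENNReal.ofReal t * ∑' j, (‖w j‖₊ : ℝ≥0∞) := by
        rw [ENNReal.tsum_mul_left, ENNReal.tsum_mul_left,
          ← enorm_eq_nnnorm (1 - t), ← enorm_eq_nnnorm t,
          Real.enorm_eq_ofReal (by linarith), Real.enorm_eq_ofReal ht0]
    _ ≤ ENNReal.ofReal (1 - t) * ENNReal.ofReal R + ENNReal.ofReal t * ENNReal.ofReal R := by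
        exact add_le_add (mul_le_mul_right hx _) (mul_le_mul_right hw _)
    _ = ENNReal.ofReal R := by
        rw [← add_mul, ← ENNReal.ofReal_add (by linarith) ht0]
        norm_num

/-- If `u` is the common image under `K` of the minimizers of `‖Kx-y‖²` over `B_R` and
`K*(y-u) ≠ 0`, then the set `Γ = {i : |(K*(y-u)) i| = ‖K*(y-u)‖_∞}` is finite and contains the
support of every minimizer; in particular every minimizer has finitely many nonzero entries. -/
theorem stmt12 {I : Type*} [Countable I] {H : Type*} [NormedAddCommGroup H]
    [InnerProductSpace ℝ H] [CompleteSpace H]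
    (K : lp (fun _ : I => ℝ) 2 →L[ℝ] H) (y : H) (R : ℝ) (hR : 0 < R)
    (u : H)
    (hu : ∀ xt ∈ l1Ball I R,
      (∀ w ∈ l1Ball I R, ‖K xt - y‖ ^ 2 ≤ ‖K w - y‖ ^ 2) → K xt = u)
    (hex : ∃ xt ∈ l1Ball I R, ∀ w ∈ l1Ball I R, ‖K xt - y‖ ^ 2 ≤ ‖K w - y‖ ^ 2)
    (hne : (ContinuousLinearMap.adjoint K) (y - u) ≠ 0) :
    {i : I | |(ContinuousLinearMap.adjoint K) (y - u) i| =
        (⨆ j : I, |(ContinuousLinearMap.adjoint K) (y - u) j|)}.Finite ∧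
    ∀ xt ∈ l1Ball I R,
      (∀ w ∈ l1Ball I R, ‖K xt - y‖ ^ 2 ≤ ‖K w - y‖ ^ 2) →
      {i : I | xt i ≠ 0} ⊆
        {i : I | |(ContinuousLinearMap.adjoint K) (y - u) i| =
          (⨆ j : I, |(ContinuousLinearMap.adjoint K) (y - u) j|)} := by
  classical
  set a : lp (fun _ : I => ℝ) 2 := (ContinuousLinearMap.adjoint K) (y - u) with ha
  set M : ℝ := ⨆ j : I, |a j| with hMdef
  have hbdd : BddAbove (Set.range fun j : I => |a j|) := by
    refine ⟨‖a‖, ?_⟩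
    rintro _ ⟨j, rfl⟩
    simpa [Real.norm_eq_abs] using lp.norm_apply_le_norm two_ne_zero a j
  obtain ⟨i₁, hi₁⟩ : ∃ i, a i ≠ 0 := by
    by_contra h
    push_neg at h
    exact hne (lp.eq_zero_iff_coeFn_eq_zero.mpr (funext h))
  have hne' : Nonempty I := ⟨i₁⟩
  have hMpos : 0 < M := lt_of_lt_of_le (abs_pos.mpr hi₁) (le_ciSup hbdd i₁)
  have hMle : ∀ i, |a i| ≤ M := fun i => le_ciSup hbdd i
  -- the set where |a i| is ≥ M/2 is finite
  have hsum2 : Summable (fun i => ‖a i‖ ^ (2 : ℝ≥0∞).toReal) :=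
    (lp.memℓp a).summable (by norm_num)
  have hS : {i : I | M / 2 ≤ |a i|}.Finite := by
    have hev := hsum2.tendsto_cofinite_zero.eventually_lt_const
      (show (0 : ℝ) < (M / 2) ^ (2 : ℝ≥0∞).toReal by positivity)
    refine (Filter.eventually_cofinite.mp hev).subset fun i hi => ?_
    simp only [Set.mem_setOf_eq] at hi ⊢
    intro hcon
    exact absurd hcon (not_lt.mpr (Real.rpow_le_rpow (by positivity) (by
      simpa [Real.norm_eq_abs] using hi) (by norm_num)))
  have hΓS : {i : I | |a i| = M} ⊆ {i : I | M / 2 ≤ |a i|} := by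
    intro i hi
    simp only [Set.mem_setOf_eq] at hi ⊢
    rw [hi]; linarith
  refine ⟨hS.subset hΓS, ?_⟩
  -- the maximum is attained at some i₀
  obtain ⟨i₂, hi₂⟩ := exists_lt_of_lt_ciSup (show M / 2 < M by linarith)
  obtain ⟨i₀, hi₀S, hi₀max⟩ := hS.toFinset.exists_max_image (fun j => |a j|)
    ⟨i₂, hS.mem_toFinset.mpr hi₂.le⟩
  have hub : ∀ j, |a j| ≤ |a i₀| := by
    intro j
    by_cases hj : M / 2 ≤ |a j|
    · exact hi₀max j (hS.mem_toFinset.mpr hj)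
    · push_neg at hj
      have := hS.mem_toFinset.mp hi₀S
      simp only [Set.mem_setOf_eq] at this
      linarith
  have hMi₀ : |a i₀| = M := le_antisymm (hMle i₀) (ciSup_le hub)
  -- main part
  intro xt hxt hmin i hi
  simp only [Set.mem_setOf_eq] at hi ⊢
  have hKxt : K xt = u := hu xt hxt hmin
  -- variational inequality
  have hvar : ∀ w ∈ l1Ball I R, (inner ℝ a w : ℝ) ≤ (inner ℝ a xt : ℝ) := by
    intro w hw
    set q : H := K (w - xt) with hq
    set c : ℝ := inner ℝ (K xt - y) q with hc
    have hstep : ∀ n : ℕ, 0 ≤ 2 * c + (1 / ((n : ℝ) + 1)) * ‖q‖ ^ 2 := by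
      intro n
      set t : ℝ := 1 / ((n : ℝ) + 1) with htdef
      have ht0 : 0 < t := by positivity
      have ht1 : t ≤ 1 := by
        rw [htdef, div_le_one (by positivity)]
        linarith [Nat.cast_nonneg (α := ℝ) n]
      have hmem := l1Ball_convex_aux ht0.le ht1 hxt hw
      have hD := hmin _ hmem
      have hKz : K (xt + t • (w - xt)) - y = (K xt - y) + t • q := by
        rw [map_add, map_smul, hq]
        abel
      rw [hKz, norm_add_sq_real, real_inner_smul_right, norm_smul, ← hc,
        Real.norm_eq_abs t, abs_of_nonneg ht0.le] at hD
      have h2 : 0 ≤ t * (2 * c + t * ‖q‖ ^ 2) := by nlinarith [hD]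
      nlinarith [h2, ht0]
    have hlim : Filter.Tendsto (fun n : ℕ => 2 * c + (1 / ((n : ℝ) + 1)) * ‖q‖ ^ 2)
        Filter.atTop (nhds (2 * c + 0 * ‖q‖ ^ 2)) :=
      tendsto_const_nhds.add (tendsto_one_div_add_atTop_nhds_zero_nat.mul_const _)
    have hcpos : 0 ≤ c := by
      have := ge_of_tendsto' hlim hstep
      simpa using this
    -- translate to inner with a
    have hiwa : (inner ℝ a (w - xt) : ℝ) = -c := by
      rw [ha, ContinuousLinearMap.adjoint_inner_left, ← hq, hc, hKxt]
      rw [show y - u = -(u - y) by abel, inner_neg_left]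
    have := hiwa ▸ neg_nonpos.mpr hcpos
    rw [inner_sub_right] at this
    linarith
  -- the single element achieving R * M
  set c0 : ℝ := if 0 ≤ a i₀ then R else -R with hc0
  have habsc0 : |c0| = R := by
    rw [hc0]; split_ifs <;> simp [abs_of_nonneg hR.le, abs_of_nonpos (by linarith : -R ≤ 0)]
  set w₀ : lp (fun _ : I => ℝ) 2 := lp.single 2 i₀ c0 with hw₀
  have hmemw₀ : w₀ ∈ l1Ball I R := by
    simp only [l1Ball, Set.mem_setOf_eq]
    have h1 : ∀ j, j ≠ i₀ → (‖w₀ j‖₊ : ℝ≥0∞) = 0 := by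
      intro j hj
      rw [hw₀, lp.single_apply_ne 2 i₀ _ hj]
      simp
    rw [tsum_eq_single i₀ h1, hw₀, lp.single_apply_self, ← enorm_eq_nnnorm, Real.enorm_eq_ofReal_abs, habsc0]
  have hinner : (inner ℝ a w₀ : ℝ) = R * M := by
    rw [real_inner_comm, hw₀, lp.inner_single_left]
    have : (inner ℝ c0 (a i₀) : ℝ) = c0 * a i₀ := by
      simp [RCLike.inner_apply, mul_comm]
    rw [this, hc0]
    split_ifs with h
    · rw [← hMi₀, abs_of_nonneg h]
    · push_neg at h
      rw [← hMi₀, abs_of_neg h]; ring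
  have hkey : R * M ≤ (inner ℝ a xt : ℝ) := hinner ▸ hvar w₀ hmemw₀
  -- conclude
  by_contra hne2
  have hlt : |a i| < M := lt_of_le_of_ne (hMle i) hne2
  simp only [l1Ball, Set.mem_setOf_eq] at hxt
  have hxtsum : Summable (fun j => ‖xt j‖) := by
    have h1 : (∑' j, (‖xt j‖₊ : ℝ≥0∞)) ≠ ⊤ := ne_top_of_le_ne_top ENNReal.ofReal_ne_top hxt
    have h2 := ENNReal.tsum_coe_ne_top_iff_summable.mp h1
    simpa only [coe_nnnorm] using NNReal.summable_coe.mpr h2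
  have hxtR : (∑' j, ‖xt j‖) ≤ R := by
    rw [← ENNReal.ofReal_le_ofReal_iff hR.le,
      ENNReal.ofReal_tsum_of_nonneg (fun j => norm_nonneg _) hxtsum]
    refine le_trans (le_of_eq ?_) hxt
    exact tsum_congr fun j => ofReal_norm _
  have hfsum : Summable (fun j => a j * xt j) := by
    have := lp.summable_inner (𝕜 := ℝ) a xt
    simpa [RCLike.inner_apply, mul_comm] using this
  have hgsum : Summable (fun j => M * ‖xt j‖) := hxtsum.mul_left M
  have hterm : ∀ j, a j * xt j ≤ M * ‖xt j‖ := by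
    intro j
    calc a j * xt j ≤ |a j * xt j| := le_abs_self _
      _ = |a j| * |xt j| := abs_mul _ _
      _ ≤ M * |xt j| := mul_le_mul_of_nonneg_right (hMle j) (abs_nonneg _)
      _ = M * ‖xt j‖ := by rw [Real.norm_eq_abs]
  have htermi : a i * xt i < M * ‖xt i‖ := by
    calc a i * xt i ≤ |a i| * |xt i| := by rw [← abs_mul]; exact le_abs_self _
      _ < M * |xt i| := mul_lt_mul_of_pos_right hlt (abs_pos.mpr hi)
      _ = M * ‖xt i‖ := by rw [Real.norm_eq_abs]
  have hltt : (∑' j, a j * xt j) < ∑' j, M * ‖xt j‖ :=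
    Summable.tsum_lt_tsum hterm htermi hfsum hgsum
  have hinnxt : (inner ℝ a xt : ℝ) = ∑' j, a j * xt j := by
    rw [lp.inner_eq_tsum]
    exact tsum_congr fun j => by simp [RCLike.inner_apply, mul_comm]
  have hsumle : (∑' j, M * ‖xt j‖) ≤ M * R := by
    rw [tsum_mul_left]
    exact mul_le_mul_of_nonneg_left hxtR hMpos.le
  rw [hinnxt] at hkey
  linarith
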